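/- arXiv:alg-geom/9712021 — 5 statements merged into one kernel-verified Lean document; each statement's English description precedes it below -/
import Mathlib

section
/- Let B be a big subset of a group G, i.e. for any g₁,g₂,g₃ ∈ G the intersection B⁻¹ ∩ Bg₁ ∩ Bg₂ ∩ Bg₃ is non-empty. Then G is generated by B. -/
/-- If `B` is a big subset of a group `G` (i.e. for all `g₁ g₂ g₃ ∈ G` the set
`B⁻¹ ∩ Bg₁ ∩ Bg₂ ∩ Bg₃` is nonempty, where `Bg = {bg : b ∈ B}`),
then `B` generates `G`. -/
theorem stmt_2 {G : Type*} [Group G] (B : Set G)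
    (hB : ∀ g₁ g₂ g₃ : G,
      (B⁻¹ ∩ {x | x * g₁⁻¹ ∈ B} ∩ {x | x * g₂⁻¹ ∈ B} ∩ {x | x * g₃⁻¹ ∈ B}).Nonempty) :
    Subgroup.closure B = ⊤ := by
  rw [eq_top_iff]
  intro g _
  obtain ⟨x, ⟨⟨-, hx1⟩, hx2⟩, -⟩ := hB g 1 1
  simp only [Set.mem_setOf_eq, mul_one, inv_one] at hx1 hx2
  have : g = (x * g⁻¹)⁻¹ * x := by group
  rw [this]
  exact mul_mem (inv_mem (Subgroup.subset_closure hx1)) (Subgroup.subset_closure hx2)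
end

section
/- Let B be a big subset of a group G and let c : G × G → C be a 2-cocycle with values in an abelian group C (with trivial G-action) such that c(b₁, b₂) = 1 whenever b₁, b₂, and b₁b₂ all lie in B. Then c is a coboundary. -/
section CocycleAux

variable {G C : Type*} [Group G] [CommGroup C]

private lemma c_one_left (c : G → G → C)
    (hcoc : ∀ g₁ g₂ g₃ : G, c g₁ g₂ * c (g₁ * g₂) g₃ = c g₂ g₃ * c g₁ (g₂ * g₃))
    (g : G) : c 1 g = c 1 1 := by
  have h := hcoc 1 1 g
  simp only [one_mul] at h
  exact (mul_right_cancel h).symm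

private lemma c_one_right (c : G → G → C)
    (hcoc : ∀ g₁ g₂ g₃ : G, c g₁ g₂ * c (g₁ * g₂) g₃ = c g₂ g₃ * c g₁ (g₂ * g₃))
    (g : G) : c g 1 = c 1 1 := by
  have h := hcoc g 1 1
  simp only [mul_one, one_mul] at h
  exact mul_right_cancel h

private lemma c_inv_comm (c : G → G → C)
    (hcoc : ∀ g₁ g₂ g₃ : G, c g₁ g₂ * c (g₁ * g₂) g₃ = c g₂ g₃ * c g₁ (g₂ * g₃))
    (g : G) : c g⁻¹ g = c g g⁻¹ := by
  have h := hcoc g g⁻¹ g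
  simp only [mul_inv_cancel, inv_mul_cancel, mul_one] at h
  rw [c_one_left c hcoc g, c_one_right c hcoc g] at h
  exact (mul_right_cancel h).symm

/-- The central extension of `G` by `C` determined by the cocycle `c`. -/
@[ext]
structure CExt (c : G → G → C)
    (hcoc : ∀ g₁ g₂ g₃ : G, c g₁ g₂ * c (g₁ * g₂) g₃ = c g₂ g₃ * c g₁ (g₂ * g₃)) :
    Type _ where
  a : C
  g : G

namespace CExt

variable {c : G → G → C}
  {hcoc : ∀ g₁ g₂ g₃ : G, c g₁ g₂ * c (g₁ * g₂) g₃ = c g₂ g₃ * c g₁ (g₂ * g₃)}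

instance : Mul (CExt c hcoc) := ⟨fun x y => ⟨x.a * y.a * c x.g y.g, x.g * y.g⟩⟩
instance : One (CExt c hcoc) := ⟨⟨(c 1 1)⁻¹, 1⟩⟩
instance : Inv (CExt c hcoc) :=
  ⟨fun x => ⟨x.a⁻¹ * (c x.g x.g⁻¹)⁻¹ * (c 1 1)⁻¹, x.g⁻¹⟩⟩

@[simp] lemma mul_a (x y : CExt c hcoc) : (x * y).a = x.a * y.a * c x.g y.g := rfl
@[simp] lemma mul_g (x y : CExt c hcoc) : (x * y).g = x.g * y.g := rfl

instance : Group (CExt c hcoc) where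
  mul := (· * ·)
  one := 1
  inv := (·⁻¹)
  mul_assoc x y z := by
    have h := hcoc x.g y.g z.g
    ext
    · show x.a * y.a * c x.g y.g * z.a * c (x.g * y.g) z.g
        = x.a * (y.a * z.a * c y.g z.g) * c x.g (y.g * z.g)
      calc x.a * y.a * c x.g y.g * z.a * c (x.g * y.g) z.g
          = x.a * y.a * z.a * (c x.g y.g * c (x.g * y.g) z.g) := by ac_rfl
        _ = x.a * y.a * z.a * (c y.g z.g * c x.g (y.g * z.g)) := by rw [h]
        _ = x.a * (y.a * z.a * c y.g z.g) * c x.g (y.g * z.g) := by ac_rfl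
    · show x.g * y.g * z.g = x.g * (y.g * z.g)
      rw [mul_assoc]
  one_mul x := by
    ext
    · show (c 1 1)⁻¹ * x.a * c 1 x.g = x.a
      rw [c_one_left c hcoc x.g, mul_comm ((c 1 1)⁻¹) x.a, mul_assoc, inv_mul_cancel,
        mul_one]
    · show 1 * x.g = x.g
      rw [one_mul]
  mul_one x := by
    ext
    · show x.a * (c 1 1)⁻¹ * c x.g 1 = x.a
      rw [c_one_right c hcoc x.g, mul_assoc, inv_mul_cancel, mul_one]
    · show x.g * 1 = x.g
      rw [mul_one]
  inv_mul_cancel x := by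
    ext
    · show x.a⁻¹ * (c x.g x.g⁻¹)⁻¹ * (c 1 1)⁻¹ * x.a * c x.g⁻¹ x.g = (c 1 1)⁻¹
      rw [c_inv_comm c hcoc x.g]
      calc x.a⁻¹ * (c x.g x.g⁻¹)⁻¹ * (c 1 1)⁻¹ * x.a * c x.g x.g⁻¹
          = (x.a⁻¹ * x.a) * ((c x.g x.g⁻¹)⁻¹ * c x.g x.g⁻¹) * (c 1 1)⁻¹ := by ac_rfl
        _ = (c 1 1)⁻¹ := by rw [inv_mul_cancel, inv_mul_cancel, one_mul, one_mul]
    · show x.g⁻¹ * x.g = 1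
      rw [inv_mul_cancel]

end CExt

/-- The canonical lift of elements of `B` to the extension. -/
def sig (c : G → G → C)
    (hcoc : ∀ g₁ g₂ g₃ : G, c g₁ g₂ * c (g₁ * g₂) g₃ = c g₂ g₃ * c g₁ (g₂ * g₃))
    (b : G) : CExt c hcoc := ⟨1, b⟩

variable {B : Set G} {c : G → G → C}
  {hcoc : ∀ g₁ g₂ g₃ : G, c g₁ g₂ * c (g₁ * g₂) g₃ = c g₂ g₃ * c g₁ (g₂ * g₃)}

private lemma sig_mul (hcB : ∀ b₁ b₂ : G, b₁ ∈ B → b₂ ∈ B → b₁ * b₂ ∈ B → c b₁ b₂ = 1)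
    {b₁ b₂ : G} (h₁ : b₁ ∈ B) (h₂ : b₂ ∈ B) (h₁₂ : b₁ * b₂ ∈ B) :
    sig c hcoc b₁ * sig c hcoc b₂ = sig c hcoc (b₁ * b₂) := by
  show CExt.mk (1 * 1 * c b₁ b₂) (b₁ * b₂) = CExt.mk 1 (b₁ * b₂)
  rw [hcB b₁ b₂ h₁ h₂ h₁₂, mul_one, mul_one]

private lemma sig_welldef
    (hB : ∀ g₁ g₂ g₃ : G,
      (B⁻¹ ∩ {x | x * g₁⁻¹ ∈ B} ∩ {x | x * g₂⁻¹ ∈ B} ∩ {x | x * g₃⁻¹ ∈ B}).Nonempty)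
    (hcB : ∀ b₁ b₂ : G, b₁ ∈ B → b₂ ∈ B → b₁ * b₂ ∈ B → c b₁ b₂ = 1)
    {a b a' b' : G} (ha : a ∈ B) (hb : b ∈ B) (ha' : a' ∈ B) (hb' : b' ∈ B)
    (h : a * b = a' * b') :
    sig c hcoc a * sig c hcoc b = sig c hcoc a' * sig c hcoc b' := by
  obtain ⟨t, ⟨⟨ht0, ht1⟩, ht2⟩, ht3⟩ := hB a⁻¹ a'⁻¹ (a * b)⁻¹
  rw [Set.mem_inv] at ht0
  simp only [Set.mem_setOf_eq, inv_inv] at ht1 ht2 ht3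
  have e1 : sig c hcoc t⁻¹ * sig c hcoc (t * a) = sig c hcoc a := by
    have := sig_mul (hcoc := hcoc) hcB ht0 ht1 (by rwa [inv_mul_cancel_left])
    rwa [inv_mul_cancel_left] at this
  have e1' : sig c hcoc t⁻¹ * sig c hcoc (t * a') = sig c hcoc a' := by
    have := sig_mul (hcoc := hcoc) hcB ht0 ht2 (by rwa [inv_mul_cancel_left])
    rwa [inv_mul_cancel_left] at this
  have e2 : sig c hcoc (t * a) * sig c hcoc b = sig c hcoc (t * (a * b)) := by
    have := sig_mul (hcoc := hcoc) hcB ht1 hb (by rwa [mul_assoc])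
    rwa [mul_assoc] at this
  have e2' : sig c hcoc (t * a') * sig c hcoc b' = sig c hcoc (t * (a * b)) := by
    have h3' : t * a' * b' ∈ B := by rw [mul_assoc, ← h]; exact ht3
    have := sig_mul (hcoc := hcoc) hcB ht2 hb' h3'
    rwa [mul_assoc, ← h] at this
  calc sig c hcoc a * sig c hcoc b
      = sig c hcoc t⁻¹ * sig c hcoc (t * a) * sig c hcoc b := by rw [e1]
    _ = sig c hcoc t⁻¹ * (sig c hcoc (t * a) * sig c hcoc b) := by rw [mul_assoc]
    _ = sig c hcoc t⁻¹ * sig c hcoc (t * (a * b)) := by rw [e2]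
    _ = sig c hcoc t⁻¹ * (sig c hcoc (t * a') * sig c hcoc b') := by rw [e2']
    _ = sig c hcoc t⁻¹ * sig c hcoc (t * a') * sig c hcoc b' := by rw [mul_assoc]
    _ = sig c hcoc a' * sig c hcoc b' := by rw [e1']

/-- A lift of every element of `G` to the extension, via a chosen decomposition. -/
noncomputable def Lf
    (hB : ∀ g₁ g₂ g₃ : G,
      (B⁻¹ ∩ {x | x * g₁⁻¹ ∈ B} ∩ {x | x * g₂⁻¹ ∈ B} ∩ {x | x * g₃⁻¹ ∈ B}).Nonempty)
    (c : G → G → C)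
    (hcoc : ∀ g₁ g₂ g₃ : G, c g₁ g₂ * c (g₁ * g₂) g₃ = c g₂ g₃ * c g₁ (g₂ * g₃))
    (k : G) : CExt c hcoc :=
  sig c hcoc ((hB k⁻¹ k⁻¹ k⁻¹).choose)⁻¹ *
    sig c hcoc ((hB k⁻¹ k⁻¹ k⁻¹).choose * k)

private lemma Lf_eq
    (hB : ∀ g₁ g₂ g₃ : G,
      (B⁻¹ ∩ {x | x * g₁⁻¹ ∈ B} ∩ {x | x * g₂⁻¹ ∈ B} ∩ {x | x * g₃⁻¹ ∈ B}).Nonempty)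
    (hcB : ∀ b₁ b₂ : G, b₁ ∈ B → b₂ ∈ B → b₁ * b₂ ∈ B → c b₁ b₂ = 1)
    {u v : G} (hu : u ∈ B) (hv : v ∈ B) :
    Lf hB c hcoc (u * v) = sig c hcoc u * sig c hcoc v := by
  have key : ∀ t : G,
      t ∈ (B⁻¹ ∩ {x | x * (u * v)⁻¹⁻¹ ∈ B} ∩ {x | x * (u * v)⁻¹⁻¹ ∈ B}
        ∩ {x | x * (u * v)⁻¹⁻¹ ∈ B}) →
      sig c hcoc t⁻¹ * sig c hcoc (t * (u * v))
        = sig c hcoc u * sig c hcoc v := by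
    rintro t ⟨⟨⟨ht0, ht1⟩, -⟩, -⟩
    rw [Set.mem_inv] at ht0
    simp only [Set.mem_setOf_eq, inv_inv] at ht1
    exact sig_welldef hB hcB ht0 ht1 hu hv (by rw [inv_mul_cancel_left])
  exact key _ ((hB (u * v)⁻¹ (u * v)⁻¹ (u * v)⁻¹).choose_spec)

private lemma Lf_g
    (hB : ∀ g₁ g₂ g₃ : G,
      (B⁻¹ ∩ {x | x * g₁⁻¹ ∈ B} ∩ {x | x * g₂⁻¹ ∈ B} ∩ {x | x * g₃⁻¹ ∈ B}).Nonempty)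
    (k : G) : (Lf hB c hcoc k).g = k := by
  show ((hB k⁻¹ k⁻¹ k⁻¹).choose)⁻¹ * ((hB k⁻¹ k⁻¹ k⁻¹).choose * k) = k
  rw [inv_mul_cancel_left]

private lemma Lf_mul_sig
    (hB : ∀ g₁ g₂ g₃ : G,
      (B⁻¹ ∩ {x | x * g₁⁻¹ ∈ B} ∩ {x | x * g₂⁻¹ ∈ B} ∩ {x | x * g₃⁻¹ ∈ B}).Nonempty)
    (hcB : ∀ b₁ b₂ : G, b₁ ∈ B → b₂ ∈ B → b₁ * b₂ ∈ B → c b₁ b₂ = 1)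
    (k : G) {a : G} (haB : a ∈ B) :
    Lf hB c hcoc (k * a) = Lf hB c hcoc k * sig c hcoc a := by
  obtain ⟨y, ⟨⟨hy0, hy1⟩, hy2⟩, -⟩ := hB k⁻¹ (a⁻¹ * k⁻¹) k⁻¹
  rw [Set.mem_inv] at hy0
  simp only [Set.mem_setOf_eq, inv_inv, mul_inv_rev] at hy1 hy2
  have hk : Lf hB c hcoc k = sig c hcoc y⁻¹ * sig c hcoc (y * k) := by
    have := Lf_eq (hcoc := hcoc) hB hcB hy0 hy1
    rwa [inv_mul_cancel_left] at this
  have hyka : y * k * a ∈ B := by rw [mul_assoc]; exact hy2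
  have hka : Lf hB c hcoc (k * a)
      = sig c hcoc y⁻¹ * sig c hcoc (y * (k * a)) := by
    have := Lf_eq (hcoc := hcoc) hB hcB hy0 hy2
    rwa [inv_mul_cancel_left] at this
  rw [hka, hk, mul_assoc, sig_mul (hcoc := hcoc) hcB hy1 haB hyka, mul_assoc y k a]

private lemma Lf_hom
    (hB : ∀ g₁ g₂ g₃ : G,
      (B⁻¹ ∩ {x | x * g₁⁻¹ ∈ B} ∩ {x | x * g₂⁻¹ ∈ B} ∩ {x | x * g₃⁻¹ ∈ B}).Nonempty)
    (hcB : ∀ b₁ b₂ : G, b₁ ∈ B → b₂ ∈ B → b₁ * b₂ ∈ B → c b₁ b₂ = 1)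
    (k₁ k₂ : G) :
    Lf hB c hcoc (k₁ * k₂) = Lf hB c hcoc k₁ * Lf hB c hcoc k₂ := by
  obtain ⟨y, ⟨⟨hy0, hy1⟩, -⟩, -⟩ := hB k₂⁻¹ k₂⁻¹ k₂⁻¹
  rw [Set.mem_inv] at hy0
  simp only [Set.mem_setOf_eq, inv_inv] at hy1
  have hk2 : Lf hB c hcoc k₂ = sig c hcoc y⁻¹ * sig c hcoc (y * k₂) := by
    have := Lf_eq (hcoc := hcoc) hB hcB hy0 hy1
    rwa [inv_mul_cancel_left] at this
  have step1 : Lf hB c hcoc (k₁ * k₂)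
      = Lf hB c hcoc (k₁ * y⁻¹) * sig c hcoc (y * k₂) := by
    have := Lf_mul_sig (hcoc := hcoc) hB hcB (k₁ * y⁻¹) hy1
    rwa [mul_assoc, inv_mul_cancel_left] at this
  rw [step1, Lf_mul_sig (hcoc := hcoc) hB hcB k₁ hy0, hk2, mul_assoc]

end CocycleAux

/-- Let `B` be a big subset of a group `G` and `c : G × G → C` a 2-cocycle with
values in an abelian group `C` (trivial `G`-action) such that `c(b₁,b₂) = 1`
whenever `b₁, b₂, b₁b₂ ∈ B`.  Then `c` is a coboundary. -/
theorem stmt_3 {G C : Type*} [Group G] [CommGroup C] (B : Set G)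
    (hB : ∀ g₁ g₂ g₃ : G,
      (B⁻¹ ∩ {x | x * g₁⁻¹ ∈ B} ∩ {x | x * g₂⁻¹ ∈ B} ∩ {x | x * g₃⁻¹ ∈ B}).Nonempty)
    (c : G → G → C)
    (hcoc : ∀ g₁ g₂ g₃ : G, c g₁ g₂ * c (g₁ * g₂) g₃ = c g₂ g₃ * c g₁ (g₂ * g₃))
    (hcB : ∀ b₁ b₂ : G, b₁ ∈ B → b₂ ∈ B → b₁ * b₂ ∈ B → c b₁ b₂ = 1) :
    ∃ f : G → C, ∀ g h : G, c g h = f g * f h * (f (g * h))⁻¹ := by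
  refine ⟨fun g => ((Lf hB c hcoc g).a)⁻¹, fun g h => ?_⟩
  simp only
  have hm := Lf_hom (hcoc := hcoc) hB hcB g h
  have ha : (Lf hB c hcoc (g * h)).a
      = (Lf hB c hcoc g).a * (Lf hB c hcoc h).a * c g h := by
    rw [hm, CExt.mul_a, Lf_g, Lf_g]
  rw [ha, inv_inv]
  generalize (Lf hB c hcoc g).a = p
  generalize (Lf hB c hcoc h).a = q
  calc c g h = (p⁻¹ * p) * ((q⁻¹ * q) * c g h) := by
        rw [inv_mul_cancel, inv_mul_cancel, one_mul, one_mul]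
    _ = p⁻¹ * q⁻¹ * (p * q * c g h) := by ac_rfl
end

section
/- Let R be the ring of integers of a number field, J and Ĵ fractional ideals of R with J·Ĵ ⊆ R, and I ⊆ J·Ĵ a non-zero ideal of R. Then the reduction homomorphism from Γ(J,Ĵ) to the group of matrices (ā₁₁, ā₁₂; ā₂₁, ā₂₂) with ā₁₁, ā₂₂ ∈ R/I, ā₁₂ ∈ J/IJ, ā₂₁ ∈ Ĵ/IĴ and ā₁₁ā₂₂ − ā₁₂ā₂₁ = 1 is surjective. -/
open NumberField FractionalIdeal nonZeroDivisors

/-- Membership in a fractional ideal is closed under addition. -/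
theorem fi_add_mem {R P : Type*} [CommRing R] [CommRing P] [Algebra R P] {S : Submonoid R}
    {A : FractionalIdeal S P} {x y : P} (hx : x ∈ A) (hy : y ∈ A) : x + y ∈ A := by
  rw [← FractionalIdeal.mem_coe] at hx hy ⊢
  exact Submodule.add_mem _ hx hy

theorem fi_zero_mem {R P : Type*} [CommRing R] [CommRing P] [Algebra R P] {S : Submonoid R}
    (A : FractionalIdeal S P) : (0 : P) ∈ A := by
  rw [← FractionalIdeal.mem_coe]
  exact Submodule.zero_mem _

/-- An avoidance/CRT lemma in a Dedekind domain: given ideals `I`, `N ≠ 0` and an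
element `a` that avoids every maximal ideal containing both `N` and `I`, there is
`x ≡ a mod I` avoiding every maximal ideal containing `N`. -/
theorem aux_crt_stmt5 {R : Type*} [CommRing R] [IsDomain R] [IsDedekindDomain R]
    (I N : Ideal R) (hN : N ≠ ⊥) (a : R)
    (ha : ∀ m : Ideal R, m.IsMaximal → N ≤ m → I ≤ m → a ∉ m) :
    ∃ x : R, x - a ∈ I ∧ ∀ m : Ideal R, m.IsMaximal → N ≤ m → x ∉ m := by
  classical
  set S := (UniqueFactorizationMonoid.normalizedFactors N).toFinset.filter
    (fun p => ¬ I ≤ p) with hSdef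
  set Q := ∏ p ∈ S, p with hQdef
  have hco : I ⊔ Q = ⊤ := by
    by_contra h
    obtain ⟨m, hm, hle⟩ := Ideal.exists_le_maximal _ h
    obtain ⟨p, hpS, hpm⟩ := (hm.isPrime.prod_le).mp (le_trans le_sup_right hle)
    obtain ⟨hpfac, hpI⟩ := Finset.mem_filter.mp hpS
    obtain ⟨hpprime, hNp⟩ :=
      (Ideal.mem_normalizedFactors_iff hN).mp (Multiset.mem_toFinset.mp hpfac)
    have hpbot : p ≠ ⊥ := fun h0 => hN (le_bot_iff.mp (h0 ▸ hNp))
    have hpmax : p.IsMaximal := hpprime.isMaximal hpbot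
    have hpm' : p = m := hpmax.eq_of_le hm.ne_top hpm
    exact hpI (hpm' ▸ le_trans le_sup_left hle)
  have h1 : (1 : R) ∈ I ⊔ Q := hco ▸ Submodule.mem_top
  obtain ⟨i, hi, q, hq, hiq⟩ := Submodule.mem_sup.mp h1
  set x := a * q + i with hxdef
  have hxa : x - a ∈ I := by
    have hxe : x - a = a * (-i) + i := by rw [hxdef]; linear_combination a * hiq
    rw [hxe]
    exact I.add_mem (I.mul_mem_left a (I.neg_mem hi)) hi
  have hx1 : x - 1 ∈ Q := by
    have hxe : x - 1 = (a - 1) * q := by rw [hxdef]; linear_combination hiq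
    rw [hxe]
    exact Q.mul_mem_left _ hq
  refine ⟨x, hxa, fun m hm hNm hxm => ?_⟩
  by_cases hIm : I ≤ m
  · have ham : a ∈ m := by
      have : a = x - (x - a) := by ring
      rw [this]; exact m.sub_mem hxm (hIm hxa)
    exact ha m hm hNm hIm ham
  · have hmS : m ∈ S := Finset.mem_filter.mpr
      ⟨Multiset.mem_toFinset.mpr
        ((Ideal.mem_normalizedFactors_iff hN).mpr ⟨hm.isPrime, hNm⟩), hIm⟩
    have hQm : Q ≤ m := Ideal.le_of_dvd (Finset.dvd_prod_of_mem (fun p => p) hmS)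
    have h1m : (1 : R) ∈ m := by
      have : (1 : R) = x - (x - 1) := by ring
      rw [this]; exact m.sub_mem hxm (hQm hx1)
    exact hm.ne_top (m.eq_top_iff_one.mpr h1m)

/-- Let `R` be the ring of integers of a number field `F`, `J`, `Ĵ` fractional
ideals with `J·Ĵ ⊆ R`, and `I ⊆ J·Ĵ` a non-zero ideal of `R`.  Surjectivity of
the reduction map `Γ(J,Ĵ) → Γ̄_I(J,Ĵ)`: every matrix `(a₁₁,a₁₂;a₂₁,a₂₂)` with
`a₁₁,a₂₂ ∈ R`, `a₁₂ ∈ J`, `a₂₁ ∈ Ĵ` whose determinant is `1` modulo `I` lifts,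
modulo `(I, IJ, IĴ, I)`, to a matrix in `Γ(J,Ĵ)`, i.e. with determinant
exactly `1`. -/
theorem stmt_5 (F : Type*) [Field F] [NumberField F]
    (J Jh : FractionalIdeal (𝓞 F)⁰ F) (hJ : J ≠ 0) (hJh : Jh ≠ 0)
    (hJJh : J * Jh ≤ 1)
    (I : Ideal (𝓞 F)) (hI : I ≠ ⊥)
    (hIJJh : (I : FractionalIdeal (𝓞 F)⁰ F) ≤ J * Jh)
    (a₁₁ a₂₂ : 𝓞 F) (a₁₂ a₂₁ : F) (h₁₂ : a₁₂ ∈ J) (h₂₁ : a₂₁ ∈ Jh)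
    (hdet : (a₁₁ : F) * (a₂₂ : F) - a₁₂ * a₂₁ - 1 ∈
      (I : FractionalIdeal (𝓞 F)⁰ F)) :
    ∃ (b₁₁ b₂₂ : 𝓞 F) (b₁₂ b₂₁ : F),
      b₁₂ ∈ J ∧ b₂₁ ∈ Jh ∧
      (b₁₁ : F) * (b₂₂ : F) - b₁₂ * b₂₁ = 1 ∧
      (b₁₁ : F) - (a₁₁ : F) ∈ (I : FractionalIdeal (𝓞 F)⁰ F) ∧
      (b₂₂ : F) - (a₂₂ : F) ∈ (I : FractionalIdeal (𝓞 F)⁰ F) ∧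
      b₁₂ - a₁₂ ∈ (I : FractionalIdeal (𝓞 F)⁰ F) * J ∧
      b₂₁ - a₂₁ ∈ (I : FractionalIdeal (𝓞 F)⁰ F) * Jh := by
  have hRinj : Function.Injective (algebraMap (𝓞 F) F) := RingOfIntegers.coe_injective
  -- Step 0: replace `a₁₂` by a nonzero `c₁₂ ≡ a₁₂ mod I·J`.
  have hIJne : (I : FractionalIdeal (𝓞 F)⁰ F) * J ≠ 0 :=
    mul_ne_zero (coeIdeal_ne_zero.mpr hI) hJ
  have hIJleJ : (I : FractionalIdeal (𝓞 F)⁰ F) * J ≤ J := by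
    calc (I : FractionalIdeal (𝓞 F)⁰ F) * J ≤ 1 * J := mul_left_mono (a := J) coeIdeal_le_one
    _ = J := one_mul J
  obtain ⟨c₁₂, hcne, hcJ, hca⟩ :
      ∃ c : F, c ≠ 0 ∧ c ∈ J ∧ c - a₁₂ ∈ (I : FractionalIdeal (𝓞 F)⁰ F) * J := by
    by_cases h0 : a₁₂ = 0
    · obtain ⟨t, ht, htne⟩ : ∃ t ∈ (I : FractionalIdeal (𝓞 F)⁰ F) * J, t ≠ 0 := by
        by_contra h
        push_neg at h
        exact hIJne (eq_zero_iff.mpr h)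
      refine ⟨t, htne, hIJleJ ht, ?_⟩
      rw [h0, sub_zero]; exact ht
    · exact ⟨a₁₂, h0, h₁₂, by rw [sub_self]; exact fi_zero_mem _⟩
  -- determinant condition for the new entry
  have hIJJhle : ((I : FractionalIdeal (𝓞 F)⁰ F) * J) * Jh ≤
      (I : FractionalIdeal (𝓞 F)⁰ F) := by
    rw [mul_assoc]
    calc (I : FractionalIdeal (𝓞 F)⁰ F) * (J * Jh)
        ≤ (I : FractionalIdeal (𝓞 F)⁰ F) * 1 := mul_right_mono hJJh
    _ = (I : FractionalIdeal (𝓞 F)⁰ F) := mul_one _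
  have hdetc : (a₁₁ : F) * (a₂₂ : F) - c₁₂ * a₂₁ - 1 ∈
      (I : FractionalIdeal (𝓞 F)⁰ F) := by
    have h1 : (c₁₂ - a₁₂) * a₂₁ ∈ (I : FractionalIdeal (𝓞 F)⁰ F) :=
      hIJJhle (mul_mem_mul hca h₂₁)
    have h2 : (a₁₁ : F) * (a₂₂ : F) - c₁₂ * a₂₁ - 1
        = ((a₁₁ : F) * (a₂₂ : F) - a₁₂ * a₂₁ - 1) + (-1 : F) * ((c₁₂ - a₁₂) * a₂₁) := by
      ring
    rw [h2]
    refine fi_add_mem hdet ?_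
    rw [← FractionalIdeal.mem_coe] at h1 ⊢
    rw [neg_one_mul]
    exact Submodule.neg_mem _ h1
  -- The ideal `N = c₁₂ · Ĵ` of `𝓞 F`
  have hspan_le : spanSingleton (𝓞 F)⁰ c₁₂ * Jh ≤ 1 :=
    le_trans (mul_left_mono (a := Jh) (spanSingleton_le_iff_mem.mpr hcJ)) hJJh
  obtain ⟨N, hN⟩ := le_one_iff_exists_coeIdeal.mp hspan_le
  have hNne : N ≠ ⊥ := by
    intro h0
    apply mul_ne_zero (spanSingleton_ne_zero_iff.mpr hcne) hJh
    rw [← hN, h0, coeIdeal_bot]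
  -- `a₁₁` avoids every maximal ideal containing `N` and `I`.
  have hkey : ∀ m : Ideal (𝓞 F), m.IsMaximal → N ≤ m → I ≤ m → a₁₁ ∉ m := by
    intro m hm hNm hIm ham
    have hνmem : c₁₂ * a₂₁ ∈ (N : FractionalIdeal (𝓞 F)⁰ F) := by
      rw [hN]; exact mul_mem_mul (mem_spanSingleton_self _ _) h₂₁
    obtain ⟨ν, hν, hνeq⟩ := (mem_coeIdeal _).mp hνmem
    obtain ⟨ε, hε, hεeq⟩ := (mem_coeIdeal _).mp hdetc
    have hmap : algebraMap (𝓞 F) F (a₁₁ * a₂₂ - ν - ε) = algebraMap (𝓞 F) F 1 := by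
      simp only [_root_.map_sub, _root_.map_mul, _root_.map_one, hνeq, hεeq,
        ← RingOfIntegers.coe_eq_algebraMap]
      ring
    have h1 : a₁₁ * a₂₂ - ν - ε = 1 := hRinj hmap
    have h1m : (1 : 𝓞 F) ∈ m := by
      rw [← h1]
      exact m.sub_mem (m.sub_mem (m.mul_mem_right a₂₂ ham) (hNm hν)) (hIm hε)
    exact hm.ne_top (m.eq_top_iff_one.mpr h1m)
  obtain ⟨x, hxa, hxm⟩ := aux_crt_stmt5 I N hNne a₁₁ hkey
  have hsup : Ideal.span {x} ⊔ N = ⊤ := by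
    by_contra h
    obtain ⟨m, hm, hle⟩ := Ideal.exists_le_maximal _ h
    exact hxm m hm (le_trans le_sup_right hle)
      ((le_trans le_sup_left hle) (Ideal.mem_span_singleton_self x))
  obtain ⟨s, hs, n, hn, hsn⟩ := Submodule.mem_sup.mp
    (show (1 : 𝓞 F) ∈ Ideal.span {x} ⊔ N from hsup ▸ Submodule.mem_top)
  obtain ⟨u, hu⟩ := Ideal.mem_span_singleton'.mp hs
  have hnmem : algebraMap (𝓞 F) F n ∈ spanSingleton (𝓞 F)⁰ c₁₂ * Jh := by
    rw [← hN]; exact (mem_coeIdeal _).mpr ⟨n, hn, rfl⟩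
  obtain ⟨w, hw, hweq⟩ := mem_singleton_mul.mp hnmem
  -- new determinant defect
  have hdnew : (x : F) * (a₂₂ : F) - c₁₂ * a₂₁ - 1 ∈
      (I : FractionalIdeal (𝓞 F)⁰ F) := by
    have h2 : ((x - a₁₁) * a₂₂ : 𝓞 F) ∈ I := I.mul_mem_right _ hxa
    have h2' : algebraMap (𝓞 F) F ((x - a₁₁) * a₂₂) ∈ (I : FractionalIdeal (𝓞 F)⁰ F) :=
      (mem_coeIdeal _).mpr ⟨_, h2, rfl⟩
    have h3 : (x : F) * (a₂₂ : F) - c₁₂ * a₂₁ - 1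
        = ((a₁₁ : F) * (a₂₂ : F) - c₁₂ * a₂₁ - 1)
          + algebraMap (𝓞 F) F ((x - a₁₁) * a₂₂) := by
      simp only [_root_.map_sub, _root_.map_mul, ← RingOfIntegers.coe_eq_algebraMap]
      ring
    rw [h3]
    exact fi_add_mem hdetc h2'
  obtain ⟨δ, hδI, hδeq⟩ := (mem_coeIdeal _).mp hdnew
  have hΔI : algebraMap (𝓞 F) F δ ∈ (I : FractionalIdeal (𝓞 F)⁰ F) :=
    (mem_coeIdeal _).mpr ⟨δ, hδI, rfl⟩
  refine ⟨x, a₂₂ - u * δ, c₁₂, a₂₁ + w * algebraMap (𝓞 F) F δ,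
    hcJ, ?_, ?_, ?_, ?_, hca, ?_⟩
  · -- b₂₁ ∈ Jh
    refine fi_add_mem h₂₁ ?_
    have hIJhle : (I : FractionalIdeal (𝓞 F)⁰ F) * Jh ≤ Jh := by
      calc (I : FractionalIdeal (𝓞 F)⁰ F) * Jh ≤ 1 * Jh := mul_left_mono (a := Jh) coeIdeal_le_one
      _ = Jh := one_mul Jh
    have hmem := hIJhle (mul_mem_mul hΔI hw)
    rwa [mul_comm] at hmem
  · -- determinant is exactly 1
    have hxu : (x : F) * (u : F) + c₁₂ * w = 1 := by
      have h3 : u * x + n = 1 := by rw [hu, hsn]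
      have h4 : algebraMap (𝓞 F) F (u * x + n) = algebraMap (𝓞 F) F 1 := by rw [h3]
      simp only [_root_.map_add, _root_.map_mul, _root_.map_one, hweq,
        ← RingOfIntegers.coe_eq_algebraMap] at h4
      rw [← h4]; ring
    have hsub : ((a₂₂ - u * δ : 𝓞 F) : F)
        = (a₂₂ : F) - (u : F) * algebraMap (𝓞 F) F δ := by
      simp only [RingOfIntegers.coe_eq_algebraMap, _root_.map_sub, _root_.map_mul,
        ← RingOfIntegers.coe_eq_algebraMap]
    rw [hsub]
    linear_combination -hδeq - algebraMap (𝓞 F) F δ * hxu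
  · -- b₁₁ ≡ a₁₁
    refine (mem_coeIdeal _).mpr ⟨x - a₁₁, hxa, ?_⟩
    simp only [_root_.map_sub, ← RingOfIntegers.coe_eq_algebraMap]
  · -- b₂₂ ≡ a₂₂
    refine (mem_coeIdeal _).mpr ⟨-(u * δ), I.neg_mem (I.mul_mem_left u hδI), ?_⟩
    simp only [RingOfIntegers.coe_eq_algebraMap, _root_.map_sub, _root_.map_mul,
      _root_.map_neg]
    ring
  · -- b₂₁ ≡ a₂₁ mod I·Jh
    have h5 : a₂₁ + w * algebraMap (𝓞 F) F δ - a₂₁ = algebraMap (𝓞 F) F δ * w := by ring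
    rw [h5]
    exact mul_mem_mul hΔI hw
end

section
/- Let R be a Dedekind domain (ring of integers of a number field), J a fractional ideal, and a₁₂ ∈ J, a₁₁ ∈ R non-zero elements such that R·a₁₁ + J·Ĵ is comaximal in the appropriate sense: if a₁₁ is relatively prime to both J/Ra₁₂ and R/JĴ (where Ĵ is a fractional ideal with JĴ ⊆ R), then R = R·a₁₁ + Ĵ·a₁₂. -/
open FractionalIdeal nonZeroDivisors

/-- Let `R` be a Dedekind domain with fraction field `K`, `J`, `Ĵ` fractional
ideals with `J·Ĵ ⊆ R`, `a₁₂ ∈ J` and `a₁₁ ∈ R` non-zero.  Assume `a₁₁` is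
relatively prime to the modules `J/R·a₁₂` and `R/J·Ĵ` (i.e. multiplication by
`a₁₁` is surjective on them: `a₁₁·J + R·a₁₂ = J` and `a₁₁·R + J·Ĵ = R`).
Then `R·a₁₁ + Ĵ·a₁₂ = R`. -/
theorem stmt_6 (R K : Type*) [CommRing R] [IsDedekindDomain R] [Field K]
    [Algebra R K] [IsFractionRing R K]
    (J Jh : FractionalIdeal R⁰ K) (hJ : J ≠ 0) (hJh : Jh ≠ 0)
    (hJJh : J * Jh ≤ 1)
    (a₁₂ : K) (h₁₂ : a₁₂ ∈ J) (h₁₂0 : a₁₂ ≠ 0)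
    (a₁₁ : R) (h₁₁0 : a₁₁ ≠ 0)
    (hprime₁ : spanSingleton R⁰ (algebraMap R K a₁₁) * J +
      spanSingleton R⁰ a₁₂ = J)
    (hprime₂ : spanSingleton R⁰ (algebraMap R K a₁₁) + J * Jh = 1) :
    spanSingleton R⁰ (algebraMap R K a₁₁) + Jh * spanSingleton R⁰ a₁₂ = 1 := by
  set A := spanSingleton R⁰ (algebraMap R K a₁₁) with hA
  set s := spanSingleton R⁰ a₁₂ with hs
  have hsJ : s ≤ J := spanSingleton_le_iff_mem.2 h₁₂
  have hA1 : A ≤ 1 := spanSingleton_le_iff_mem.2 ⟨a₁₁, trivial, rfl⟩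
  have key : J * Jh ≤ A + Jh * s := by
    calc J * Jh = (A * J + s) * Jh := by rw [hprime₁]
      _ = A * (J * Jh) + Jh * s := by ring
      _ ≤ A * 1 + Jh * s := sup_le ((mul_le_mul_right hJJh A).trans le_sup_left) le_sup_right
      _ = A + Jh * s := by rw [mul_one]
  refine le_antisymm ?_ ?_
  · calc A + Jh * s ≤ 1 + Jh * J := sup_le (hA1.trans le_sup_left) ((mul_le_mul_right hsJ Jh).trans le_sup_right)
      _ ≤ 1 + 1 := sup_le le_sup_left ((by rwa [mul_comm] at hJJh : Jh * J ≤ 1).trans le_sup_right)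
      _ = 1 := by rw [← FractionalIdeal.sup_eq_add, sup_idem]
  · rw [← hprime₂, ← FractionalIdeal.sup_eq_add A (J*Jh),
      ← FractionalIdeal.sup_eq_add A (Jh*s)]
    exact sup_le le_sup_left key
end

section
/- Let G̃ be a central extension of a group G with central kernel generated by ε, and suppose G̃ is perfect (equals its own commutator subgroup). Then for every prime p, the push-forward of the extension along ℤ → ℤ/pℤ (sending ε to a generator) is a non-trivial central extension of G by ℤ/pℤ, provided ε has infinite order in G̃. -/
open scoped commutatorElement

/-- Commutators are unchanged by multiplying the entries by central elements. -/
lemma comm_central {H : Type*} [Group H] (a b u v : H)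
    (hu : a⁻¹ * u ∈ Subgroup.center H) (hv : b⁻¹ * v ∈ Subgroup.center H) :
    ⁅u, v⁆ = ⁅a, b⁆ := by
  obtain ⟨z, hz, hz'⟩ : ∃ z ∈ Subgroup.center H, u = a * z :=
    ⟨a⁻¹ * u, hu, by group⟩
  obtain ⟨w, hw, hw'⟩ : ∃ w ∈ Subgroup.center H, v = b * w :=
    ⟨b⁻¹ * v, hv, by group⟩
  subst hz' hw'
  rw [Subgroup.mem_center_iff] at hz hw
  simp only [commutatorElement_def, mul_inv_rev]
  calc a * z * (b * w) * (z⁻¹ * a⁻¹) * (w⁻¹ * b⁻¹)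
      = a * (z * (b * w * z⁻¹)) * a⁻¹ * (w⁻¹ * b⁻¹) := by group
    _ = a * ((b * w * z⁻¹) * z) * a⁻¹ * (w⁻¹ * b⁻¹) := by rw [hz]
    _ = a * b * (w * (a⁻¹ * w⁻¹)) * b⁻¹ := by group
    _ = a * b * ((a⁻¹ * w⁻¹) * w) * b⁻¹ := by rw [hw]
    _ = a * b * a⁻¹ * b⁻¹ := by group

/-- Let `G̃` be a perfect group, `ε` a central element of infinite order, with
`G = G̃/⟨ε⟩`.  Then for every prime `p` the push-forward of the central
extension `1 → ⟨ε⟩ → G̃ → G → 1` along `ℤ → ℤ/pℤ`, i.e. the extension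
`1 → ⟨ε⟩/⟨εᵖ⟩ → G̃/⟨εᵖ⟩ → G → 1`, does not split: there is no section of the
projection `G̃/⟨εᵖ⟩ → G̃/⟨ε⟩`. -/
theorem stmt_17 {G : Type*} [Group G] (ε : G)
    (hcent : ε ∈ Subgroup.center G)
    (hinf : ∀ n : ℤ, ε ^ n = 1 → n = 0)
    (hperf : commutator G = ⊤)
    (p : ℕ) (hp : p.Prime)
    [hN : (Subgroup.zpowers (ε ^ p)).Normal]
    [hZ : (Subgroup.zpowers ε).Normal]
    (hle : Subgroup.zpowers (ε ^ p) ≤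
      (Subgroup.zpowers ε).comap (MonoidHom.id G)) :
    ¬ ∃ s : (G ⧸ Subgroup.zpowers ε) →* (G ⧸ Subgroup.zpowers (ε ^ p)),
      (QuotientGroup.map (Subgroup.zpowers (ε ^ p)) (Subgroup.zpowers ε)
          (MonoidHom.id G) hle).comp s =
        MonoidHom.id (G ⧸ Subgroup.zpowers ε) := by
  rintro ⟨s, hs⟩
  set π := QuotientGroup.map (Subgroup.zpowers (ε ^ p)) (Subgroup.zpowers ε)
      (MonoidHom.id G) hle with hπ
  have hsect : ∀ y, π (s y) = y := fun y => DFunLike.congr_fun hs y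
  -- elements of the kernel of π are central
  have hker : ∀ x : G ⧸ Subgroup.zpowers (ε ^ p), π x = 1 →
      x ∈ Subgroup.center (G ⧸ Subgroup.zpowers (ε ^ p)) := by
    intro x hx
    obtain ⟨g, rfl⟩ := QuotientGroup.mk_surjective x
    have h1 : π (QuotientGroup.mk g) = QuotientGroup.mk g := rfl
    rw [h1, QuotientGroup.eq_one_iff] at hx
    obtain ⟨n, rfl⟩ := hx
    rw [Subgroup.mem_center_iff]
    intro y
    obtain ⟨h, rfl⟩ := QuotientGroup.mk_surjective y
    have hc : ε ^ n ∈ Subgroup.center G := Subgroup.zpow_mem _ hcent n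
    rw [Subgroup.mem_center_iff] at hc
    show QuotientGroup.mk (h * ε ^ n) = QuotientGroup.mk (ε ^ n * h)
    rw [hc h]
  -- the quotient is perfect
  have hperf' : commutator (G ⧸ Subgroup.zpowers (ε ^ p)) = ⊤ := by
    have hsur : Function.Surjective
        (QuotientGroup.mk' (Subgroup.zpowers (ε ^ p))) :=
      QuotientGroup.mk'_surjective _
    rw [commutator, ← Subgroup.map_top_of_surjective
      (QuotientGroup.mk' (Subgroup.zpowers (ε ^ p))) hsur,
      ← Subgroup.map_commutator, ← commutator, hperf,
      Subgroup.map_top_of_surjective _ hsur]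
  -- s ∘ π = id on all of the quotient
  have key : ∀ x : G ⧸ Subgroup.zpowers (ε ^ p), s (π x) = x := by
    have hle' : commutator (G ⧸ Subgroup.zpowers (ε ^ p)) ≤
        MonoidHom.eqLocus (s.comp π) (MonoidHom.id _) := by
      rw [commutator, Subgroup.commutator_le]
      intro a _ b _
      show s (π ⁅a, b⁆) = ⁅a, b⁆
      rw [map_commutatorElement, map_commutatorElement]
      exact comm_central a b _ _
        (hker _ (by simp [map_mul, map_inv, hsect]))
        (hker _ (by simp [map_mul, map_inv, hsect]))
    intro x
    have : x ∈ MonoidHom.eqLocus (s.comp π) (MonoidHom.id _) := by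
      apply hle'
      rw [hperf']
      exact Subgroup.mem_top x
    exact this
  -- apply to the class of ε
  have hε : π (QuotientGroup.mk ε) = 1 := by
    have h1 : π (QuotientGroup.mk ε) = QuotientGroup.mk ε := rfl
    rw [h1, QuotientGroup.eq_one_iff]
    exact Subgroup.mem_zpowers ε
  have heq : (QuotientGroup.mk ε : G ⧸ Subgroup.zpowers (ε ^ p)) = 1 := by
    have := key (QuotientGroup.mk ε)
    rw [hε, map_one] at this
    exact this.symm
  rw [QuotientGroup.eq_one_iff] at heq
  obtain ⟨n, hn⟩ := heq
  have hn' : (ε ^ p) ^ n = ε := hn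
  have hz : ε ^ ((p : ℤ) * n - 1) = 1 := by
    have h2 : (ε ^ p) ^ n = ε ^ ((p : ℤ) * n) := by
      rw [← zpow_natCast, ← zpow_mul]
    rw [h2] at hn'
    rw [zpow_sub, hn', zpow_one, mul_inv_cancel]
  have h0 := hinf _ hz
  have hpn : (p : ℤ) * n = 1 := by omega
  have hd : (p : ℤ) ∣ 1 := ⟨n, hpn.symm⟩
  have hle1 : (p : ℤ) ≤ 1 := Int.le_of_dvd one_pos hd
  have h2 := hp.one_lt
  omega
end
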